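/- The function Q(x) = (3 / cosh²(2x))^{1/4} satisfies the ODE Q'' + Q⁵ = Q on ℝ. -/

import Mathlib

noncomputable def Qgs (x : ℝ) : ℝ := (3 / (Real.cosh (2 * x)) ^ 2) ^ ((1 : ℝ) / 4)

noncomputable def K : ℝ := (3:ℝ) ^ ((1:ℝ)/4)

noncomputable def Q1 (x : ℝ) : ℝ := -K * (Real.sinh (2*x) * Real.cosh (2*x) ^ (-(3:ℝ)/2))

lemma coshpos (x : ℝ) : 0 < Real.cosh (2*x) := Real.cosh_pos _

lemma Qgs_eq (x : ℝ) : Qgs x = K * Real.cosh (2*x) ^ (-(1:ℝ)/2) := by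
  have hc := coshpos x
  unfold Qgs K
  rw [div_eq_mul_inv, ← Real.rpow_two, ← Real.rpow_neg hc.le,
    Real.mul_rpow (by norm_num) (Real.rpow_nonneg hc.le _),
    ← Real.rpow_mul hc.le]
  norm_num

lemma hasDeriv_2x (x : ℝ) : HasDerivAt (fun y : ℝ => 2*y) 2 x := by
  simpa using (hasDerivAt_id x).const_mul 2

lemma hasDeriv_cosh (x : ℝ) : HasDerivAt (fun x => Real.cosh (2*x)) (Real.sinh (2*x) * 2) x :=
  (Real.hasDerivAt_cosh (2*x)).comp x (hasDeriv_2x x)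

lemma deriv_Qgs : deriv Qgs = Q1 := by
  funext x
  have hc := coshpos x
  have h3 : HasDerivAt (fun x => K * Real.cosh (2*x) ^ (-(1:ℝ)/2))
      (K * ((Real.sinh (2*x) * 2) * (-(1:ℝ)/2) * Real.cosh (2*x) ^ ((-(1:ℝ)/2) - 1))) x :=
    (((hasDeriv_cosh x).rpow_const (Or.inl hc.ne')).const_mul K)
  rw [show Qgs = fun x => K * Real.cosh (2*x) ^ (-(1:ℝ)/2) from funext Qgs_eq, h3.deriv, Q1]
  have : ((-(1:ℝ)/2) - 1) = (-(3:ℝ)/2) := by norm_num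
  rw [this]; ring

lemma deriv_Q1 (x : ℝ) : deriv Q1 x =
    -K * ((2 * Real.cosh (2*x)) * Real.cosh (2*x) ^ (-(3:ℝ)/2)
      + Real.sinh (2*x) * ((Real.sinh (2*x) * 2) * (-(3:ℝ)/2) * Real.cosh (2*x) ^ ((-(3:ℝ)/2) - 1))) := by
  have hc := coshpos x
  have hs : HasDerivAt (fun x => Real.sinh (2*x)) (Real.cosh (2*x) * 2) x :=
    (Real.hasDerivAt_sinh (2*x)).comp x (hasDeriv_2x x)
  have hp : HasDerivAt (fun x => Real.cosh (2*x) ^ (-(3:ℝ)/2))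
      ((Real.sinh (2*x) * 2) * (-(3:ℝ)/2) * Real.cosh (2*x) ^ ((-(3:ℝ)/2) - 1)) x :=
    (hasDeriv_cosh x).rpow_const (Or.inl hc.ne')
  have h : HasDerivAt (fun x => -K * (Real.sinh (2*x) * Real.cosh (2*x) ^ (-(3:ℝ)/2))) _ x :=
    ((hs.mul hp).const_mul (-K))
  rw [show Q1 = fun x => -K * (Real.sinh (2*x) * Real.cosh (2*x) ^ (-(3:ℝ)/2)) from rfl, h.deriv]
  ring

theorem ground_state_ode : ∀ x : ℝ, deriv (deriv Qgs) x + Qgs x ^ 5 = Qgs x := by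
  intro x
  have hc := coshpos x
  rw [deriv_Qgs, deriv_Q1, Qgs_eq]
  set c := Real.cosh (2*x) with hcdef
  set s := Real.sinh (2*x) with hsdef
  have hs2 : s ^ 2 = c ^ 2 - 1 := by rw [hsdef, hcdef, Real.sinh_sq]
  set u := c ^ (-(1:ℝ)/2) with hudef
  have h1 : c ^ (-(3:ℝ)/2) = u ^ 3 := by
    rw [hudef, ← Real.rpow_natCast (c ^ (-(1:ℝ)/2)) 3, ← Real.rpow_mul hc.le]
    norm_num
  have h2 : c ^ ((-(3:ℝ)/2) - 1) = u ^ 5 := by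
    rw [hudef, ← Real.rpow_natCast (c ^ (-(1:ℝ)/2)) 5, ← Real.rpow_mul hc.le]
    norm_num
  have h3 : u ^ 2 * c = 1 := by
    rw [hudef, ← Real.rpow_natCast (c ^ (-(1:ℝ)/2)) 2, ← Real.rpow_mul hc.le]
    norm_num
    rw [Real.rpow_neg_one]
    exact inv_mul_cancel₀ hc.ne'
  have eK : K ^ 5 = 3 * K := by
    rw [K, ← Real.rpow_natCast ((3:ℝ) ^ ((1:ℝ)/4)) 5, ← Real.rpow_mul (by norm_num)]
    rw [show ((1:ℝ)/4 * (5:ℕ)) = 1 + 1/4 by push_cast; norm_num,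
      Real.rpow_add (by norm_num), Real.rpow_one]
  rw [mul_pow, eK, h1, h2]
  linear_combination (3*K*u^5)*hs2 + (K*u*(3*c*u^2+1))*h3
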